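/- Fix coprime positive integers m and n and an integer l ≥ 1. Then the set A'_gen, consisting of all γ ∈ (ℤ ∪ {∞})^l having at least one finite coordinate and such that for each i, either γ_i = ∞ or γ_i ∈ c_i(γ)·m·n + m·ℕ + n·ℕ, is a multi-semimodule; in particular, if γ, γ' ∈ A'_gen then the componentwise minimum min(γ, γ') lies in A'_gen. -/

import Mathlib

/-- `c_i(γ)`: the number of indices `j` with `γ j > γ i`. -/
noncomputable def cIdx {l : ℕ} (γ : Fin l → WithTop ℤ) (i : Fin l) : ℕ :=
  Set.ncard {j : Fin l | γ i < γ j}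

/-- A multi-semimodule for parameters `m`, `n` inside `(ℤ ∪ {∞})^l`, where
`∞ = ⊤ : WithTop ℤ` (so `∞ + a = ∞` and `min(∞, a) = a`). -/
def IsMultiSemimodule (m n l : ℕ) (A : Set (Fin l → WithTop ℤ)) : Prop :=
  -- (1) boundedness below, and containing all sufficiently positive tuples
  (∃ N₁ : ℤ, ∀ γ ∈ A, ∀ i, (N₁ : WithTop ℤ) ≤ γ i) ∧
  (∃ N₂ : ℤ, ∀ γ : Fin l → WithTop ℤ,
      (∀ i, (N₂ : WithTop ℤ) ≤ γ i) → (∃ i, γ i ≠ ⊤) → γ ∈ A) ∧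
  -- (2) elements have a finite coordinate; stability under adding a·m̲ + b·n̲
  (∀ γ ∈ A, (∃ i, γ i ≠ ⊤) ∧
      ∀ a b : ℕ, (fun i => γ i + ((a * m + b * n : ℤ) : WithTop ℤ)) ∈ A) ∧
  -- (3) stability under componentwise minimum
  (∀ γ ∈ A, ∀ γ' ∈ A, (fun i => min (γ i) (γ' i)) ∈ A)

/-- The set `A'_gen` of all `γ` with at least one finite coordinate such that each
coordinate is `∞` or lies in `c_i(γ)·m·n + m·ℕ + n·ℕ`. -/
noncomputable def AgenSet' (m n l : ℕ) : Set (Fin l → WithTop ℤ) :=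
  {γ | (∃ i, γ i ≠ ⊤) ∧ ∀ i, γ i = ⊤ ∨
      ∃ a b : ℕ, γ i = (((cIdx γ i * m * n + a * m + b * n : ℕ) : ℤ) : WithTop ℤ)}

lemma rep_of_coprime {m n : ℕ} (hm : 0 < m) (hn : 0 < n) (hmn : Nat.Coprime m n)
    (k : ℕ) (hk : m * n ≤ k) : ∃ a b : ℕ, k = a * m + b * n := by
  haveI : NeZero n := ⟨hn.ne'⟩
  set u : ZMod n := (k : ZMod n) * (m : ZMod n)⁻¹ with hu
  set x := u.val with hx
  have hxlt : x < n := ZMod.val_lt u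
  have hunit : IsUnit ((m : ℕ) : ZMod n) := (ZMod.isUnit_iff_coprime m n).mpr hmn
  have hcast : ((x * m : ℕ) : ZMod n) = (k : ZMod n) := by
    push_cast
    rw [hx, ZMod.natCast_val, ZMod.cast_id, hu, mul_assoc,
      ZMod.inv_mul_of_unit _ hunit, mul_one]
  have hle : x * m ≤ k := by
    have h1 : (x + 1) * m ≤ n * m := Nat.mul_le_mul_right m hxlt
    have h2 : n * m = m * n := Nat.mul_comm n m
    nlinarith
  have hdvd : n ∣ k - x * m := (Nat.modEq_iff_dvd' hle).mp
    ((ZMod.natCast_eq_natCast_iff _ _ _).mp hcast)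
  obtain ⟨b, hb⟩ := hdvd
  refine ⟨x, b, ?_⟩
  rw [Nat.mul_comm n b] at hb
  omega

lemma cIdx_le {l : ℕ} (γ : Fin l → WithTop ℤ) (i : Fin l) : cIdx γ i ≤ l := by
  have h := Set.ncard_le_ncard (Set.subset_univ {j : Fin l | γ i < γ j}) Set.finite_univ
  simpa [Set.ncard_univ, cIdx] using h

lemma cIdx_add {l : ℕ} (γ : Fin l → WithTop ℤ) (c : ℤ) (i : Fin l) :
    cIdx (fun j => γ j + (c : WithTop ℤ)) i = cIdx γ i := by
  unfold cIdx
  congr 1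
  ext j
  simp only [Set.mem_setOf_eq]
  exact WithTop.add_lt_add_iff_right (WithTop.coe_ne_top)

lemma cIdx_min_le {l : ℕ} (γ γ' : Fin l → WithTop ℤ) (i : Fin l) (h : γ i ≤ γ' i) :
    cIdx (fun j => min (γ j) (γ' j)) i ≤ cIdx γ i := by
  unfold cIdx
  apply Set.ncard_le_ncard _ (Set.toFinite _)
  intro j hj
  simp only [Set.mem_setOf_eq, min_eq_left h] at hj ⊢
  exact lt_of_lt_of_le hj (min_le_left _ _)

lemma shift_rep (m n c c' : ℕ) (hcc : c' ≤ c) (x : WithTop ℤ)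
    (h : ∃ a b : ℕ, x = (((c * m * n + a * m + b * n : ℕ) : ℤ) : WithTop ℤ)) :
    ∃ a b : ℕ, x = (((c' * m * n + a * m + b * n : ℕ) : ℤ) : WithTop ℤ) := by
  obtain ⟨a, b, hab⟩ := h
  refine ⟨a + (c - c') * n, b, ?_⟩
  rw [hab]
  congr 2
  have : c = c' + (c - c') := by omega
  set d := c - c' with hd
  rw [this]; ring_nf

lemma min_mem (m n l : ℕ) (γ : Fin l → WithTop ℤ) (hγ : γ ∈ AgenSet' m n l)
    (γ' : Fin l → WithTop ℤ) (hγ' : γ' ∈ AgenSet' m n l) :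
    (fun i => min (γ i) (γ' i)) ∈ AgenSet' m n l := by
  obtain ⟨⟨i0, hi0⟩, h2⟩ := hγ
  obtain ⟨-, h2'⟩ := hγ'
  refine ⟨⟨i0, fun h => hi0 (top_le_iff.mp (h ▸ min_le_left (γ i0) (γ' i0)))⟩, ?_⟩
  intro i
  rcases le_total (γ i) (γ' i) with hle | hle
  · have hmin : min (γ i) (γ' i) = γ i := min_eq_left hle
    rcases h2 i with ht | hrep
    · left; show min (γ i) (γ' i) = ⊤; rw [hmin, ht]
    · right
      beta_reduce
      rw [hmin]
      exact shift_rep m n (cIdx γ i) _ (cIdx_min_le γ γ' i hle) _ hrep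
  · have hmin : min (γ i) (γ' i) = γ' i := min_eq_right hle
    rcases h2' i with ht | hrep
    · left; show min (γ i) (γ' i) = ⊤; rw [hmin, ht]
    · right
      beta_reduce
      rw [hmin]
      have hkey := cIdx_min_le γ' γ i hle
      have heq : (fun j : Fin l => min (γ' j) (γ j)) = (fun j => min (γ j) (γ' j)) := by
        funext j; exact min_comm _ _
      rw [heq] at hkey
      exact shift_rep m n (cIdx γ' i) _ hkey _ hrep


theorem AgenSet'_isMultiSemimodule (m n l : ℕ) (hm : 0 < m) (hn : 0 < n)
    (hmn : Nat.Coprime m n) (hl : 1 ≤ l) :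
    IsMultiSemimodule m n l (AgenSet' m n l) ∧
      ∀ γ ∈ AgenSet' m n l, ∀ γ' ∈ AgenSet' m n l,
        (fun i => min (γ i) (γ' i)) ∈ AgenSet' m n l := by
  refine ⟨⟨⟨0, ?_⟩, ⟨((l + 1) * m * n : ℕ), ?_⟩, ?_, min_mem m n l⟩, min_mem m n l⟩
  · -- lower bound
    rintro γ ⟨-, h2⟩ i
    rcases h2 i with ht | ⟨a, b, hab⟩
    · rw [ht]; exact le_top
    · rw [hab]
      exact_mod_cast WithTop.coe_le_coe.mpr (by exact_mod_cast Int.natCast_nonneg _)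
  · -- large tuples
    intro γ hge hfin
    refine ⟨hfin, fun i => ?_⟩
    rcases eq_or_ne (γ i) ⊤ with ht | ht
    · exact Or.inl ht
    · right
      obtain ⟨z, hz⟩ := WithTop.ne_top_iff_exists.mp ht
      have hzge : ((l + 1) * m * n : ℕ) ≤ z := by
        have := hge i
        rw [← hz] at this
        exact_mod_cast WithTop.coe_le_coe.mp (by exact_mod_cast this)
      set k := z.toNat with hk
      have hkz : (k : ℤ) = z := Int.toNat_of_nonneg (le_trans (by positivity) hzge)
      have hkge : (l + 1) * m * n ≤ k := by omega
      have hc : cIdx γ i ≤ l := cIdx_le γ i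
      have hsub : m * n ≤ k - cIdx γ i * m * n := by
        have h1 : cIdx γ i * m * n ≤ l * m * n := by
          apply Nat.mul_le_mul_right
          exact Nat.mul_le_mul_right m hc
        have h2 : (l + 1) * m * n = l * m * n + m * n := by ring
        omega
      obtain ⟨a, b, hab⟩ := rep_of_coprime hm hn hmn _ hsub
      refine ⟨a, b, ?_⟩
      rw [← hz, ← hkz]
      norm_cast
      have h1 : cIdx γ i * m * n ≤ k := by nlinarith
      omega
  · -- finite coordinate and shift stability
    rintro γ ⟨hfin, h2⟩
    refine ⟨hfin, fun a b => ?_⟩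
    set c : ℤ := (a * m + b * n : ℤ) with hcdef
    constructor
    · obtain ⟨i, hi⟩ := hfin
      exact ⟨i, by simp [WithTop.add_ne_top, hi]⟩
    · intro i
      rcases h2 i with ht | ⟨a', b', hab⟩
      · left; simp [ht]
      · right
        refine ⟨a' + a, b' + b, ?_⟩
        beta_reduce
        rw [cIdx_add γ c i, hab]
        have : ((((cIdx γ i * m * n + a' * m + b' * n : ℕ) : ℤ)) : WithTop ℤ)
            + (c : WithTop ℤ)
            = (((cIdx γ i * m * n + a' * m + b' * n : ℤ) + c : ℤ) : WithTop ℤ) := by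
          push_cast; ring
        rw [this, hcdef]
        congr 1
        push_cast
        ring_nf
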